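/- Let n ≥ 5 be an integer. Then the 1-total bondage number of the complete graph K_n equals 2n − 5: b_t^1(K_n) = 2n − 5. -/

import Mathlib

open SimpleGraph

/-- A set `S` of vertices is a total dominating set of `G` if every vertex of `G`
is adjacent to at least one vertex of `S`. -/
def IsTotalDominatingSet {V : Type*} (G : SimpleGraph V) (S : Set V) : Prop :=
  ∀ v : V, ∃ u ∈ S, G.Adj v u

/-- The total domination number of `G`: the minimum cardinality of a total
dominating set of `G`. -/
noncomputable def totalDominationNumber {V : Type*} (G : SimpleGraph V) : ℕ :=
  sInf {n : ℕ | ∃ S : Set V, S.ncard = n ∧ IsTotalDominatingSet G S}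

/-- A graph has no isolated vertices if every vertex has a neighbor. -/
def NoIsolatedVerts {V : Type*} (G : SimpleGraph V) : Prop :=
  ∀ v : V, ∃ u : V, G.Adj v u

/-- The `k`-total bondage number of `G`: the minimum cardinality of a set `F` of
edges of `G` such that `G − F` has no isolated vertices and the total domination
number of `G − F` is at least `γ_t(G) + k`. -/
noncomputable def kTotalBondage {V : Type*} (G : SimpleGraph V) (k : ℕ) : ℕ :=
  sInf {m : ℕ | ∃ F : Set (Sym2 V), F ⊆ G.edgeSet ∧ F.ncard = m ∧
    NoIsolatedVerts (G.deleteEdges F) ∧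
    totalDominationNumber G + k ≤ totalDominationNumber (G.deleteEdges F)}

section Aux
open Finset

/-- If every element of `S` is reachable from `x0`, then `#S ≤ #edges + 1`. -/
lemma reach_card_le {V : Type*} [Fintype V] [DecidableEq V] (H : SimpleGraph V)
    [DecidableRel H.Adj] (x0 : V) (S : Finset V)
    (hS : ∀ s ∈ S, H.Reachable x0 s) : S.card ≤ H.edgeFinset.card + 1 := by
  classical
  have key : ∀ s ∈ S.erase x0, ∃ t, H.Adj s t ∧ H.dist t x0 < H.dist s x0 := by
    intro s hs
    have hne : s ≠ x0 := Finset.ne_of_mem_erase hs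
    have hr : H.Reachable s x0 := (hS s (Finset.mem_of_mem_erase hs)).symm
    obtain ⟨w, hw⟩ := hr.exists_walk_length_eq_dist
    have hpos : 0 < H.dist s x0 := hr.pos_dist_of_ne hne
    cases w with
    | nil => simp at hw; exact absurd rfl hne
    | cons h p =>
      rename_i t
      refine ⟨t, h, ?_⟩
      have := H.dist_le p
      simp [SimpleGraph.Walk.length_cons] at hw
      omega
  set g : V → V := fun s =>
    if h : ∃ t, H.Adj s t ∧ H.dist t x0 < H.dist s x0 then h.choose else s with hg
  have hgs : ∀ s ∈ S.erase x0, H.Adj s (g s) ∧ H.dist (g s) x0 < H.dist s x0 := by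
    intro s hs
    have h := key s hs
    simp only [hg, dif_pos h]
    exact h.choose_spec
  have hcard : (S.erase x0).card ≤ H.edgeFinset.card := by
    apply Finset.card_le_card_of_injOn (fun s => s(s, g s))
    · intro s hs
      simp only [Finset.mem_coe, SimpleGraph.mem_edgeFinset, SimpleGraph.mem_edgeSet]
      exact (hgs s hs).1
    · intro s hs s' hs' h
      simp only [Sym2.eq_iff] at h
      rcases h with ⟨h1, h2⟩ | ⟨h1, h2⟩
      · exact h1
      · exfalso
        have d1 := (hgs s hs).2
        have d2 := (hgs s' hs').2
        rw [h2] at d1; rw [← h1] at d2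
        omega
  by_cases h : x0 ∈ S
  · have h2 := Finset.card_erase_add_one h
    omega
  · rw [Finset.erase_eq_of_notMem h] at hcard
    omega


/-- adjacency pattern of the "blown-up 5-cycle" on values -/
def bR (x y : ℕ) : Prop :=
  (x = 0 ∧ y = 1) ∨ (x = 1 ∧ y = 2) ∨ (x = 2 ∧ y = 3) ∨
  (4 ≤ x ∧ y = 0) ∨ (4 ≤ x ∧ y = 3)

instance : DecidablePred (fun p : ℕ × ℕ => bR p.1 p.2) := fun p => by
  unfold bR; infer_instance

instance (x y : ℕ) : Decidable (bR x y) := by unfold bR; infer_instance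

/-- the "blown-up 5-cycle" graph on `Fin n` -/
def GF (n : ℕ) : SimpleGraph (Fin n) where
  Adj x y := bR x.val y.val ∨ bR y.val x.val
  symm := ⟨fun x y h => h.symm⟩
  loopless := ⟨fun x h => by
    rcases h with h | h <;> (unfold bR at h; omega)⟩

instance (n : ℕ) : DecidableRel (GF n).Adj := fun x y =>
  inferInstanceAs (Decidable (_ ∨ _))

lemma GF_adj {n : ℕ} (x y : Fin n) :
    (GF n).Adj x y ↔ bR x.val y.val ∨ bR y.val x.val := Iff.rfl

/-- common neighbour property of `GF` -/
lemma GF_commonNbr {n : ℕ} (hn : 5 ≤ n) (x y : Fin n) (hxy : x ≠ y)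
    (hnadj : ¬(GF n).Adj x y) : ∃ z, (GF n).Adj z x ∧ (GF n).Adj z y := by
  have hx := x.isLt
  have hy := y.isLt
  have hval : x.val ≠ y.val := fun h => hxy (Fin.ext h)
  rw [GF_adj] at hnadj
  unfold bR at hnadj
  push_neg at hnadj
  -- helper to produce witnesses
  have mk : ∀ k : ℕ, k < n → (Fin n) := fun k hk => ⟨k, hk⟩
  -- case analysis on the values of x and y
  rcases (by omega : x.val = 0 ∨ x.val = 1 ∨ x.val = 2 ∨ x.val = 3 ∨ 4 ≤ x.val) with
    hxv | hxv | hxv | hxv | hxv <;>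
  rcases (by omega : y.val = 0 ∨ y.val = 1 ∨ y.val = 2 ∨ y.val = 3 ∨ 4 ≤ y.val) with
    hyv | hyv | hyv | hyv | hyv <;>
  first
  | omega
  | (exact ⟨⟨0, by omega⟩, by rw [GF_adj]; unfold bR; simp; omega,
      by rw [GF_adj]; unfold bR; simp; omega⟩)
  | (exact ⟨⟨1, by omega⟩, by rw [GF_adj]; unfold bR; simp; omega,
      by rw [GF_adj]; unfold bR; simp; omega⟩)
  | (exact ⟨⟨2, by omega⟩, by rw [GF_adj]; unfold bR; simp; omega,
      by rw [GF_adj]; unfold bR; simp; omega⟩)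
  | (exact ⟨⟨3, by omega⟩, by rw [GF_adj]; unfold bR; simp; omega,
      by rw [GF_adj]; unfold bR; simp; omega⟩)
  | (exact ⟨⟨4, by omega⟩, by rw [GF_adj]; unfold bR; simp; omega,
      by rw [GF_adj]; unfold bR; simp; omega⟩)

lemma GF_card {n : ℕ} (hn : 5 ≤ n) : (GF n).edgeFinset.card = 2 * n - 5 := by
  classical
  set i0 : Fin n := ⟨0, by omega⟩
  set i1 : Fin n := ⟨1, by omega⟩
  set i2 : Fin n := ⟨2, by omega⟩
  set i3 : Fin n := ⟨3, by omega⟩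
  set A : Finset (Fin n) := univ.filter (fun a : Fin n => 4 ≤ a.val) with hA
  set E0 : Finset (Sym2 (Fin n)) :=
    ({s(i0,i1), s(i1,i2), s(i2,i3)} : Finset (Sym2 (Fin n)))
      ∪ A.image (fun a => s(a, i0)) ∪ A.image (fun a => s(a, i3)) with hE0
  have hmemA : ∀ a : Fin n, a ∈ A ↔ 4 ≤ a.val := by
    intro a; simp [hA]
  have hEeq : (GF n).edgeFinset = E0 := by
    ext e
    induction e with
    | _ x y =>
      rw [SimpleGraph.mem_edgeFinset, SimpleGraph.mem_edgeSet, GF_adj]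
      simp only [hE0, Finset.mem_union, Finset.mem_insert, Finset.mem_singleton,
        Finset.mem_image]
      constructor
      · intro h
        have hvals : bR x.val y.val ∨ bR y.val x.val := h
        unfold bR at hvals
        have hx4 : x.val < n := x.isLt
        have hy4 : y.val < n := y.isLt
        rcases hvals with (⟨h1,h2⟩|⟨h1,h2⟩|⟨h1,h2⟩|⟨h1,h2⟩|⟨h1,h2⟩)
          | (⟨h1,h2⟩|⟨h1,h2⟩|⟨h1,h2⟩|⟨h1,h2⟩|⟨h1,h2⟩)
        · exact Or.inl (Or.inl (Or.inl (by rw [show x = i0 from Fin.ext h1,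
            show y = i1 from Fin.ext h2])))
        · exact Or.inl (Or.inl (Or.inr (Or.inl (by rw [show x = i1 from Fin.ext h1,
            show y = i2 from Fin.ext h2]))))
        · exact Or.inl (Or.inl (Or.inr (Or.inr (by rw [show x = i2 from Fin.ext h1,
            show y = i3 from Fin.ext h2]))))
        · exact Or.inl (Or.inr ⟨x, (hmemA x).2 h1,
            by rw [show y = i0 from Fin.ext h2]⟩)
        · exact Or.inr ⟨x, (hmemA x).2 h1, by rw [show y = i3 from Fin.ext h2]⟩
        · exact Or.inl (Or.inl (Or.inl (by rw [show y = i0 from Fin.ext h1,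
            show x = i1 from Fin.ext h2, Sym2.eq_swap])))
        · exact Or.inl (Or.inl (Or.inr (Or.inl (by rw [show y = i1 from Fin.ext h1,
            show x = i2 from Fin.ext h2, Sym2.eq_swap]))))
        · exact Or.inl (Or.inl (Or.inr (Or.inr (by rw [show y = i2 from Fin.ext h1,
            show x = i3 from Fin.ext h2, Sym2.eq_swap]))))
        · exact Or.inl (Or.inr ⟨y, (hmemA y).2 h1,
            by rw [show x = i0 from Fin.ext h2, Sym2.eq_swap]⟩)
        · exact Or.inr ⟨y, (hmemA y).2 h1, by rw [show x = i3 from Fin.ext h2,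
            Sym2.eq_swap]⟩
      · intro h
        unfold bR
        rcases h with ((h | h | h) | ⟨a, ha, h⟩) | ⟨a, ha, h⟩
        · rw [Sym2.eq_iff] at h
          rcases h with ⟨rfl, rfl⟩ | ⟨rfl, rfl⟩
          · left; left; exact ⟨rfl, rfl⟩
          · right; left; exact ⟨rfl, rfl⟩
        · rw [Sym2.eq_iff] at h
          rcases h with ⟨rfl, rfl⟩ | ⟨rfl, rfl⟩
          · left; right; left; exact ⟨rfl, rfl⟩
          · right; right; left; exact ⟨rfl, rfl⟩
        · rw [Sym2.eq_iff] at h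
          rcases h with ⟨rfl, rfl⟩ | ⟨rfl, rfl⟩
          · left; right; right; left; exact ⟨rfl, rfl⟩
          · right; right; right; left; exact ⟨rfl, rfl⟩
        · rw [hmemA] at ha
          rw [Sym2.eq_iff] at h
          rcases h with ⟨rfl, rfl⟩ | ⟨rfl, rfl⟩
          · left; right; right; right; left; exact ⟨ha, rfl⟩
          · right; right; right; right; left; exact ⟨ha, rfl⟩
        · rw [hmemA] at ha
          rw [Sym2.eq_iff] at h
          rcases h with ⟨rfl, rfl⟩ | ⟨rfl, rfl⟩
          · left; right; right; right; right; exact ⟨ha, rfl⟩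
          · right; right; right; right; right; exact ⟨ha, rfl⟩
  -- cardinality computation
  have hAcard : A.card = n - 4 := by
    have h1 : (univ.filter (fun a : Fin n => ¬ 4 ≤ a.val)) = {i0, i1, i2, i3} := by
      ext a
      simp only [Finset.mem_filter, Finset.mem_univ, true_and, Finset.mem_insert,
        Finset.mem_singleton, not_le]
      constructor
      · intro h
        rcases (by omega : a.val = 0 ∨ a.val = 1 ∨ a.val = 2 ∨ a.val = 3) with
          h' | h' | h' | h'
        · exact Or.inl (Fin.ext h')
        · exact Or.inr (Or.inl (Fin.ext h'))
        · exact Or.inr (Or.inr (Or.inl (Fin.ext h')))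
        · exact Or.inr (Or.inr (Or.inr (Fin.ext h')))
      · rintro (rfl | rfl | rfl | rfl) <;> simp [i0, i1, i2, i3]
    have h2 : ({i0, i1, i2, i3} : Finset (Fin n)).card = 4 := by
      rw [Finset.card_insert_of_notMem (by simp [i0, i1, i2, i3, Fin.ext_iff]),
        Finset.card_insert_of_notMem (by simp [i1, i2, i3, Fin.ext_iff]),
        Finset.card_insert_of_notMem (by simp [i2, i3, Fin.ext_iff])]
      rfl
    have h3 := Finset.card_filter_add_card_filter_not
      (s := (univ : Finset (Fin n))) (p := fun a : Fin n => 4 ≤ a.val)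
    rw [h1, h2] at h3
    rw [← hA] at h3
    have h4 : (univ : Finset (Fin n)).card = n := by simp
    omega
  have hi0 : i0.val = 0 := rfl
  have hi1 : i1.val = 1 := rfl
  have hi2 : i2.val = 2 := rfl
  have hi3 : i3.val = 3 := rfl
  have hc0 : (A.image (fun a => s(a, i0))).card = n - 4 := by
    rw [Finset.card_image_of_injOn, hAcard]
    intro a ha a' ha' h
    rw [Finset.mem_coe, hmemA] at ha ha'
    rw [Sym2.eq_iff] at h
    rcases h with ⟨h1, -⟩ | ⟨h1, h2⟩
    · exact h1
    · exfalso
      have := congrArg Fin.val h1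
      rw [hi0] at this
      omega
  have hc3 : (A.image (fun a => s(a, i3))).card = n - 4 := by
    rw [Finset.card_image_of_injOn, hAcard]
    intro a ha a' ha' h
    rw [Finset.mem_coe, hmemA] at ha ha'
    rw [Sym2.eq_iff] at h
    rcases h with ⟨h1, -⟩ | ⟨h1, h2⟩
    · exact h1
    · exfalso
      have := congrArg Fin.val h1
      rw [hi3] at this
      omega
  have hctri : ({s(i0,i1), s(i1,i2), s(i2,i3)} : Finset (Sym2 (Fin n))).card = 3 := by
    rw [Finset.card_insert_of_notMem, Finset.card_insert_of_notMem]
    · rfl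
    · simp only [Finset.mem_singleton, Sym2.eq_iff, Fin.ext_iff, hi0, hi1, hi2, hi3]
      omega
    · simp only [Finset.mem_insert, Finset.mem_singleton, Sym2.eq_iff, Fin.ext_iff,
        hi0, hi1, hi2, hi3]
      omega
  have hd1 : Disjoint ({s(i0,i1), s(i1,i2), s(i2,i3)} : Finset (Sym2 (Fin n)))
      (A.image (fun a => s(a, i0))) := by
    rw [Finset.disjoint_right]
    intro e he
    obtain ⟨a, ha, rfl⟩ := Finset.mem_image.1 he
    rw [hmemA] at ha
    simp only [Finset.mem_insert, Finset.mem_singleton, Sym2.eq_iff, Fin.ext_iff,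
      hi0, hi1, hi2, hi3]
    omega
  have hd2 : Disjoint (({s(i0,i1), s(i1,i2), s(i2,i3)} : Finset (Sym2 (Fin n)))
      ∪ A.image (fun a => s(a, i0))) (A.image (fun a => s(a, i3))) := by
    rw [Finset.disjoint_right]
    intro e he
    obtain ⟨a, ha, rfl⟩ := Finset.mem_image.1 he
    rw [hmemA] at ha
    intro hmem
    rcases Finset.mem_union.1 hmem with hmem | hmem
    · simp only [Finset.mem_insert, Finset.mem_singleton, Sym2.eq_iff, Fin.ext_iff,
        hi0, hi1, hi2, hi3] at hmem
      omega
    · obtain ⟨a', ha', heq⟩ := Finset.mem_image.1 hmem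
      rw [hmemA] at ha'
      rw [Sym2.eq_iff] at heq
      rcases heq with ⟨h1, h2⟩ | ⟨h1, h2⟩
      · have := congrArg Fin.val h2
        rw [hi0, hi3] at this
        omega
      · have := congrArg Fin.val h2
        rw [hi0] at this
        omega
  rw [hEeq, hE0, Finset.card_union_of_disjoint hd2, Finset.card_union_of_disjoint hd1,
    hctri, hc0, hc3]
  omega


lemma tdn_top {n : ℕ} (hn : 5 ≤ n) :
    totalDominationNumber (⊤ : SimpleGraph (Fin n)) = 2 := by
  have i0 : Fin n := ⟨0, by omega⟩
  set j0 : Fin n := ⟨0, by omega⟩ with hj0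
  set j1 : Fin n := ⟨1, by omega⟩ with hj1
  have hne : j0 ≠ j1 := by
    intro h
    have := congrArg Fin.val h
    simp [hj0, hj1] at this
  have hdom : IsTotalDominatingSet (⊤ : SimpleGraph (Fin n)) {j0, j1} := by
    intro v
    by_cases hv : v = j0
    · exact ⟨j1, Or.inr rfl, by rw [SimpleGraph.top_adj, hv]; exact hne⟩
    · exact ⟨j0, Or.inl rfl, by rw [SimpleGraph.top_adj]; exact hv⟩
  apply le_antisymm
  · exact Nat.sInf_le ⟨{j0, j1}, Set.ncard_pair hne, hdom⟩
  · apply le_csInf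
    · exact ⟨2, {j0, j1}, Set.ncard_pair hne, hdom⟩
    rintro m ⟨S, rfl, hS⟩
    obtain ⟨u, huS, hu⟩ := hS j0
    obtain ⟨u', hu'S, hu'⟩ := hS u
    have hne2 : u ≠ u' := hu'.ne
    have h2 : 1 < S.ncard := (Set.one_lt_ncard_iff (Set.toFinite S)).2 ⟨u, u', huS, hu'S, hne2⟩
    omega

lemma H0_noiso {n : ℕ} (hn : 5 ≤ n) :
    NoIsolatedVerts ((⊤ : SimpleGraph (Fin n)).deleteEdges (GF n).edgeSet) := by
  intro v
  have hv := v.isLt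
  have pick : ∀ k : ℕ, (hk : k < n) → v.val ≠ k → ¬(GF n).Adj v ⟨k, hk⟩ →
      ∃ u, ((⊤ : SimpleGraph (Fin n)).deleteEdges (GF n).edgeSet).Adj v u := by
    intro k hk hne hnadj
    refine ⟨⟨k, hk⟩, ?_⟩
    rw [SimpleGraph.deleteEdges_adj, SimpleGraph.top_adj, SimpleGraph.mem_edgeSet]
    exact ⟨fun h => hne (congrArg Fin.val h), hnadj⟩
  rcases (by omega : v.val = 0 ∨ v.val = 1 ∨ v.val = 2 ∨ v.val = 3 ∨ 4 ≤ v.val) with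
    hvv | hvv | hvv | hvv | hvv
  · exact pick 2 (by omega) (by omega) (by rw [GF_adj]; unfold bR; simp; omega)
  · exact pick 3 (by omega) (by omega) (by rw [GF_adj]; unfold bR; simp; omega)
  · exact pick 0 (by omega) (by omega) (by rw [GF_adj]; unfold bR; simp; omega)
  · exact pick 1 (by omega) (by omega) (by rw [GF_adj]; unfold bR; simp; omega)
  · exact pick 1 (by omega) (by omega) (by rw [GF_adj]; unfold bR; simp; omega)

lemma H0_tds {n : ℕ} (hn : 5 ≤ n) (S : Set (Fin n))
    (hS : IsTotalDominatingSet ((⊤ : SimpleGraph (Fin n)).deleteEdges (GF n).edgeSet) S) :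
    3 ≤ S.ncard := by
  by_contra hlt
  push_neg at hlt
  have v0 : Fin n := ⟨0, by omega⟩
  obtain ⟨x, hxS, hx⟩ := hS v0
  obtain ⟨y, hyS, hxy⟩ := hS x
  rw [SimpleGraph.deleteEdges_adj, SimpleGraph.top_adj, SimpleGraph.mem_edgeSet] at hxy
  have hne : x ≠ y := hxy.1
  have hnadj : ¬(GF n).Adj x y := hxy.2
  have hsub : ({x, y} : Set (Fin n)) ⊆ S := by
    rintro w (rfl | rfl)
    · exact hxS
    · exact hyS
  have hSeq : S = {x, y} := by
    apply (Set.eq_of_subset_of_ncard_le hsub ?_ (Set.toFinite S)).symm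
    rw [Set.ncard_pair hne]
    omega
  obtain ⟨z, hz1, hz2⟩ := GF_commonNbr hn x y hne hnadj
  obtain ⟨u, huS, hu⟩ := hS z
  rw [hSeq] at huS
  rw [SimpleGraph.deleteEdges_adj, SimpleGraph.mem_edgeSet] at hu
  rcases huS with rfl | rfl
  · exact hu.2 hz1
  · exact hu.2 hz2


/-- Induced-type subgraph on a finset, as a graph on the same vertex type. -/
def indG {n : ℕ} (D : SimpleGraph (Fin n)) (W : Finset (Fin n)) : SimpleGraph (Fin n) where
  Adj x y := D.Adj x y ∧ x ∈ W ∧ y ∈ W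
  symm := ⟨fun x y ⟨h1, h2, h3⟩ => ⟨h1.symm, h3, h2⟩⟩
  loopless := ⟨fun x h => D.irrefl h.1⟩

instance {n : ℕ} (D : SimpleGraph (Fin n)) [DecidableRel D.Adj] (W : Finset (Fin n)) :
    DecidableRel (indG D W).Adj := fun x y =>
  inferInstanceAs (Decidable (D.Adj x y ∧ x ∈ W ∧ y ∈ W))

lemma indG_adj {n : ℕ} (D : SimpleGraph (Fin n)) (W : Finset (Fin n)) (x y : Fin n) :
    (indG D W).Adj x y ↔ D.Adj x y ∧ x ∈ W ∧ y ∈ W := Iff.rfl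

lemma key7 {n : ℕ} (hn : 5 ≤ n) (D : SimpleGraph (Fin n)) [DecidableRel D.Adj]
    (hΔ : ∀ v, D.degree v ≤ n - 2)
    (hP : ∀ x y : Fin n, x ≠ y → ¬D.Adj x y → ∃ z, D.Adj z x ∧ D.Adj z y)
    (v a b : Fin n) (hNv : D.neighborFinset v = {a, b}) (hab : a ≠ b) :
    ((D.neighborFinset a ∩ ((univ : Finset (Fin n)) \ {v,a,b})) \ D.neighborFinset b).card
      + ((D.neighborFinset b ∩ ((univ : Finset (Fin n)) \ {v,a,b})) \ D.neighborFinset a).card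
      ≤ (indG D ((univ : Finset (Fin n)) \ {v,a,b})).edgeFinset.card + 1
        + (if D.Adj a b then 1 else 0) := by
  classical
  set W : Finset (Fin n) := (univ : Finset (Fin n)) \ {v,a,b} with hW
  set Na := D.neighborFinset a with hNa
  set Nb := D.neighborFinset b with hNb
  set Aset := (Na ∩ W) \ Nb with hAset
  set Bset := (Nb ∩ W) \ Na with hBset
  have hmemW : ∀ x : Fin n, x ∈ W ↔ x ≠ v ∧ x ≠ a ∧ x ≠ b := by
    intro x; simp [hW, not_or]
  have hadjv : ∀ z : Fin n, D.Adj v z ↔ z = a ∨ z = b := by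
    intro z; rw [← mem_neighborFinset, hNv]; simp
  have hva : D.Adj v a := (hadjv a).2 (Or.inl rfl)
  have hvb : D.Adj v b := (hadjv b).2 (Or.inr rfl)
  have hvna : v ≠ a := fun h => D.irrefl (v := v) (by rw [h] at hva ⊢; exact hva)
  have hvnb : v ≠ b := fun h => D.irrefl (v := v) (by rw [h] at hvb ⊢; exact hvb)
  have hWcard : W.card = n - 3 := by
    rw [hW, Finset.card_sdiff_of_subset (by simp)]
    have : ({v, a, b} : Finset (Fin n)).card = 3 := by
      rw [Finset.card_insert_of_notMem (by simp [hvna, hvnb]),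
        Finset.card_insert_of_notMem (by simp [hab])]
      rfl
    simp [this]
  have hcover : ∀ x ∈ W, D.Adj a x ∨ D.Adj b x := by
    intro x hx
    rw [hmemW] at hx
    have hnadj : ¬D.Adj x v := by
      intro h
      rcases (hadjv x).1 h.symm with h' | h' <;> simp [h'] at hx
    obtain ⟨z, hz1, hz2⟩ := hP x v hx.1 hnadj
    rcases (hadjv z).1 hz2.symm with h' | h'
    · exact Or.inl (h' ▸ hz1)
    · exact Or.inr (h' ▸ hz1)
  have hAmem : ∀ x, x ∈ Aset ↔ D.Adj a x ∧ x ∈ W ∧ ¬D.Adj b x := by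
    intro x
    simp only [hAset, hNa, hNb, Finset.mem_sdiff, Finset.mem_inter, mem_neighborFinset]
    tauto
  have hBmem : ∀ x, x ∈ Bset ↔ D.Adj b x ∧ x ∈ W ∧ ¬D.Adj a x := by
    intro x
    simp only [hBset, hNa, hNb, Finset.mem_sdiff, Finset.mem_inter, mem_neighborFinset]
    tauto
  by_cases hA : Aset.Nonempty
  · by_cases hB : Bset.Nonempty
    · -- both nonempty : connectivity argument
      obtain ⟨x0, hx0⟩ := hA
      obtain ⟨y0, hy0⟩ := hB
      have cross : ∀ x ∈ Aset, ∀ y ∈ Bset, (indG D W).Reachable x y := by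
        intro x hx y hy
        rw [hAmem] at hx; rw [hBmem] at hy
        have hxy : x ≠ y := fun h => hy.2.2 (h ▸ hx.1)
        by_cases hadj : D.Adj x y
        · exact SimpleGraph.Adj.reachable
            (show (indG D W).Adj x y from ⟨hadj, hx.2.1, hy.2.1⟩)
        · obtain ⟨z, hz1, hz2⟩ := hP x y hxy hadj
          have hzW : z ∈ W := by
            rw [hmemW]
            refine ⟨?_, ?_, ?_⟩
            · rintro rfl
              rcases (hadjv x).1 hz1 with h' | h' <;>
                [exact ((hmemW x).1 hx.2.1).2.1 h'; exact ((hmemW x).1 hx.2.1).2.2 h']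
            · rintro rfl; exact hy.2.2 hz2
            · rintro rfl; exact hx.2.2 hz1
          exact SimpleGraph.Reachable.trans
            (SimpleGraph.Adj.reachable
              (show (indG D W).Adj x z from ⟨hz1.symm, hx.2.1, hzW⟩))
            (SimpleGraph.Adj.reachable
              (show (indG D W).Adj z y from ⟨hz2, hzW, hy.2.1⟩))
      have hreach : ∀ s ∈ Aset ∪ Bset, (indG D W).Reachable x0 s := by
        intro s hs
        rcases Finset.mem_union.1 hs with hs | hs
        · exact ((cross x0 hx0 y0 hy0).trans (cross s hs y0 hy0).symm)
        · exact cross x0 hx0 s hs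
      have hcard := reach_card_le (indG D W) x0 (Aset ∪ Bset) hreach
      have hdisj : Disjoint Aset Bset := by
        rw [Finset.disjoint_left]
        intro x hx hx'
        exact ((hAmem x).1 hx).2.2 ((hBmem x).1 hx').1
      rw [Finset.card_union_of_disjoint hdisj] at hcard
      split <;> omega
    · -- Bset empty
      rw [Finset.not_nonempty_iff_eq_empty] at hB
      by_cases hadj : D.Adj a b
      · exfalso
        have hsub : insert v (insert b W) ⊆ Na := by
          intro x hx
          rw [hNa, mem_neighborFinset]
          simp only [Finset.mem_insert] at hx
          rcases hx with rfl | rfl | hx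
          · exact hva.symm
          · exact hadj
          · rcases hcover x hx with h' | h'
            · exact h'
            · by_cases h'' : D.Adj a x
              · exact h''
              · exfalso
                have : x ∈ Bset := (hBmem x).2 ⟨h', hx, h''⟩
                simp [hB] at this
        have hc : (insert v (insert b W)).card = n - 1 := by
          rw [Finset.card_insert_of_notMem, Finset.card_insert_of_notMem]
          · omega
          · rw [hmemW]; tauto
          · simp only [Finset.mem_insert]
            rw [hmemW]; tauto
        have h1 := Finset.card_le_card hsub
        have h2 : Na.card ≤ n - 2 := by rw [hNa]; exact hΔ a
        omega
      · have hmap : ∀ x ∈ Aset, ∃ z, (indG D W).Adj x z ∧ z ∈ Nb := by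
          intro x hx
          rw [hAmem] at hx
          have hxb : x ≠ b := ((hmemW x).1 hx.2.1).2.2
          obtain ⟨z, hz1, hz2⟩ := hP x b hxb (fun h => hx.2.2 h.symm)
          have hzW : z ∈ W := by
            rw [hmemW]
            refine ⟨?_, ?_, ?_⟩
            · rintro rfl
              rcases (hadjv x).1 hz1 with h' | h' <;>
                [exact ((hmemW x).1 hx.2.1).2.1 h'; exact ((hmemW x).1 hx.2.1).2.2 h']
            · rintro rfl; exact hadj hz2
            · exact fun h => D.irrefl (h ▸ hz2)
          exact ⟨z, ⟨hz1.symm, hx.2.1, hzW⟩, by rw [hNb, mem_neighborFinset]; exact hz2.symm⟩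
        choose g hg1 hg2 using hmap
        have hcard : Aset.card ≤ (indG D W).edgeFinset.card := by
          apply Finset.card_le_card_of_injOn
            (fun x => if h : x ∈ Aset then s(x, g x h) else s(x,x))
          · intro x hx
            simp only [hx, dif_pos]
            simp only [Finset.mem_coe.mp hx, dif_pos, Finset.mem_coe, SimpleGraph.mem_edgeFinset,
              SimpleGraph.mem_edgeSet]
            exact hg1 x hx
          · intro x hx x' hx' h
            simp only [Finset.mem_coe] at hx hx'
            simp only [hx, hx', dif_pos, Sym2.eq_iff] at h
            rcases h with ⟨h1, _⟩ | ⟨h1, h2⟩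
            · exact h1
            · exfalso
              have hmem : x ∈ Nb := h1 ▸ hg2 x' hx'
              rw [hNb, mem_neighborFinset] at hmem
              exact ((hAmem x).1 hx).2.2 hmem
        have hBz : Bset.card = 0 := by simp [hB]
        split <;> omega
  · -- Aset empty
    rw [Finset.not_nonempty_iff_eq_empty] at hA
    by_cases hadj : D.Adj a b
    · exfalso
      have hsub : insert v (insert a W) ⊆ Nb := by
        intro x hx
        rw [hNb, mem_neighborFinset]
        simp only [Finset.mem_insert] at hx
        rcases hx with rfl | rfl | hx
        · exact hvb.symm
        · exact hadj.symm
        · rcases hcover x hx with h' | h'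
          · by_cases h'' : D.Adj b x
            · exact h''
            · exfalso
              have : x ∈ Aset := (hAmem x).2 ⟨h', hx, h''⟩
              simp [hA] at this
          · exact h'
      have hc : (insert v (insert a W)).card = n - 1 := by
        rw [Finset.card_insert_of_notMem, Finset.card_insert_of_notMem]
        · omega
        · rw [hmemW]; tauto
        · simp only [Finset.mem_insert]
          rw [hmemW]; tauto
      have h1 := Finset.card_le_card hsub
      have h2 : Nb.card ≤ n - 2 := by rw [hNb]; exact hΔ b
      omega
    · have hmap : ∀ y ∈ Bset, ∃ z, (indG D W).Adj y z ∧ z ∈ Na := by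
        intro y hy
        rw [hBmem] at hy
        have hya : y ≠ a := ((hmemW y).1 hy.2.1).2.1
        obtain ⟨z, hz1, hz2⟩ := hP y a hya (fun h => hy.2.2 h.symm)
        have hzW : z ∈ W := by
          rw [hmemW]
          refine ⟨?_, ?_, ?_⟩
          · rintro rfl
            rcases (hadjv y).1 hz1 with h' | h' <;>
              [exact ((hmemW y).1 hy.2.1).2.1 h'; exact ((hmemW y).1 hy.2.1).2.2 h']
          · exact fun h => D.irrefl (h ▸ hz2)
          · rintro rfl; exact hadj hz2.symm
        exact ⟨z, ⟨hz1.symm, hy.2.1, hzW⟩, by rw [hNa, mem_neighborFinset]; exact hz2.symm⟩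
      choose g hg1 hg2 using hmap
      have hcard : Bset.card ≤ (indG D W).edgeFinset.card := by
        apply Finset.card_le_card_of_injOn
          (fun y => if h : y ∈ Bset then s(y, g y h) else s(y,y))
        · intro y hy
          simp only [hy, dif_pos]
          simp only [Finset.mem_coe.mp hy, dif_pos, Finset.mem_coe, SimpleGraph.mem_edgeFinset,
              SimpleGraph.mem_edgeSet]
          exact hg1 y hy
        · intro y hy y' hy' h
          simp only [Finset.mem_coe] at hy hy'
          simp only [hy, hy', dif_pos, Sym2.eq_iff] at h
          rcases h with ⟨h1, _⟩ | ⟨h1, h2⟩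
          · exact h1
          · exfalso
            have hmem : y ∈ Na := h1 ▸ hg2 y' hy'
            rw [hNa, mem_neighborFinset] at hmem
            exact ((hBmem y).1 hy).2.2 hmem
      have hAz : Aset.card = 0 := by simp [hA]
      split <;> omega

lemma mindeg2 {n : ℕ} (hn : 5 ≤ n) (D : SimpleGraph (Fin n)) [DecidableRel D.Adj]
    (hΔ : ∀ v, D.degree v ≤ n - 2)
    (hP : ∀ x y : Fin n, x ≠ y → ¬D.Adj x y → ∃ z, D.Adj z x ∧ D.Adj z y) :
    ∀ v, 2 ≤ D.degree v := by
  intro v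
  by_contra hlt
  push_neg at hlt
  interval_cases h : D.degree v
  · -- degree 0
    have hN : D.neighborFinset v = ∅ := Finset.card_eq_zero.1 h
    have hadj : ∀ z, ¬D.Adj v z := by
      intro z hz
      have : z ∈ D.neighborFinset v := (mem_neighborFinset _ _ _).2 hz
      simp [hN] at this
    obtain ⟨u, hu⟩ : ∃ u : Fin n, u ≠ v := by
      by_cases h0 : v = ⟨0, by omega⟩
      · exact ⟨⟨1, by omega⟩, by rw [h0]; simp [Fin.ext_iff]⟩
      · exact ⟨⟨0, by omega⟩, fun h' => h0 h'.symm⟩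
    obtain ⟨z, _, hz2⟩ := hP u v hu (fun h' => hadj u h'.symm)
    exact hadj z hz2.symm
  · -- degree 1
    obtain ⟨u, hu⟩ := Finset.card_eq_one.1 h
    have huv : D.Adj v u := by
      rw [← mem_neighborFinset, hu]; simp
    have hNu : ∀ z, D.Adj v z ↔ z = u := by
      intro z; rw [← mem_neighborFinset, hu]; simp
    have hsub : Finset.univ.erase u ⊆ D.neighborFinset u := by
      intro w hw
      have hwu : w ≠ u := Finset.ne_of_mem_erase hw
      rw [mem_neighborFinset]
      by_cases hwv : w = v
      · rw [hwv]; exact huv.symm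
      · have hnadj : ¬D.Adj w v := fun h' => hwu ((hNu w).1 h'.symm)
        obtain ⟨z, hz1, hz2⟩ := hP w v hwv hnadj
        have : z = u := (hNu z).1 hz2.symm
        rw [← this]; exact hz1
    have h1 := Finset.card_le_card hsub
    have h2 : (Finset.univ.erase u).card = n - 1 := by
      rw [Finset.card_erase_of_mem (Finset.mem_univ u)]
      simp
    have h3 := hΔ u
    rw [SimpleGraph.degree] at h3
    omega

lemma er_bound {n : ℕ} (hn : 5 ≤ n) (D : SimpleGraph (Fin n)) [DecidableRel D.Adj]
    (hΔ : ∀ v, D.degree v ≤ n - 2)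
    (hP : ∀ x y : Fin n, x ≠ y → ¬D.Adj x y → ∃ z, D.Adj z x ∧ D.Adj z y) :
    2 * n - 5 ≤ D.edgeSet.ncard := by
  classical
  have hEcard : D.edgeSet.ncard = D.edgeFinset.card := by
    rw [← SimpleGraph.coe_edgeFinset, Set.ncard_coe_finset]
  rw [hEcard]
  have hmin := mindeg2 hn D hΔ hP
  have hsum := D.sum_degrees_eq_twice_card_edges
  have hcardu : (Finset.univ : Finset (Fin n)).card = n := by simp
  by_cases hc2 : ∃ v, D.degree v ≤ 2
  · -- minimum degree 2 case
    obtain ⟨v, hv⟩ := hc2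
    have hv2 : D.degree v = 2 := le_antisymm hv (hmin v)
    obtain ⟨a, b, hab, hNv⟩ := Finset.card_eq_two.1 hv2
    set W : Finset (Fin n) := (univ : Finset (Fin n)) \ {v,a,b} with hW
    set Na := D.neighborFinset a with hNa
    set Nb := D.neighborFinset b with hNb
    set H := indG D W with hH
    have hmemW : ∀ x : Fin n, x ∈ W ↔ x ≠ v ∧ x ≠ a ∧ x ≠ b := by
      intro x; simp [hW, not_or]
    have hadjv : ∀ z : Fin n, D.Adj v z ↔ z = a ∨ z = b := by
      intro z; rw [← mem_neighborFinset, hNv]; simp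
    have hva : D.Adj v a := (hadjv a).2 (Or.inl rfl)
    have hvb : D.Adj v b := (hadjv b).2 (Or.inr rfl)
    have hvna : v ≠ a := fun h => D.irrefl (v := v) (by rw [h] at hva ⊢; exact hva)
    have hvnb : v ≠ b := fun h => D.irrefl (v := v) (by rw [h] at hvb ⊢; exact hvb)
    have hvabcard : ({v, a, b} : Finset (Fin n)).card = 3 := by
      rw [Finset.card_insert_of_notMem (by simp [hvna, hvnb]),
        Finset.card_insert_of_notMem (by simp [hab])]
      rfl
    have hWcard : W.card = n - 3 := by
      rw [hW, Finset.card_sdiff_of_subset (by simp)]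
      simp [hvabcard]
    have hcover : ∀ x ∈ W, D.Adj a x ∨ D.Adj b x := by
      intro x hx
      rw [hmemW] at hx
      have hnadj : ¬D.Adj x v := by
        intro h
        rcases (hadjv x).1 h.symm with h' | h' <;> simp [h'] at hx
      obtain ⟨z, hz1, hz2⟩ := hP x v hx.1 hnadj
      rcases (hadjv z).1 hz2.symm with h' | h'
      · exact Or.inl (h' ▸ hz1)
      · exact Or.inr (h' ▸ hz1)
    -- (3) inclusion-exclusion
    have hunion : (Na ∩ W) ∪ (Nb ∩ W) = W := by
      apply Finset.Subset.antisymm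
      · intro x hx
        rcases Finset.mem_union.1 hx with hx | hx <;> exact (Finset.mem_inter.1 hx).2
      · intro x hx
        rcases hcover x hx with h' | h'
        · exact Finset.mem_union.2 (Or.inl (Finset.mem_inter.2
            ⟨by rw [hNa, mem_neighborFinset]; exact h', hx⟩))
        · exact Finset.mem_union.2 (Or.inr (Finset.mem_inter.2
            ⟨by rw [hNb, mem_neighborFinset]; exact h', hx⟩))
    have hIE := Finset.card_union_add_card_inter (Na ∩ W) (Nb ∩ W)
    rw [hunion] at hIE
    -- (8)
    have h8a := Finset.card_inter_add_card_sdiff (Na ∩ W) Nb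
    have h8b := Finset.card_inter_add_card_sdiff (Nb ∩ W) Na
    have hCeq : (Nb ∩ W) ∩ Na = (Na ∩ W) ∩ Nb := by
      ext x; simp only [Finset.mem_inter]; tauto
    have hCeq2 : (Na ∩ W) ∩ (Nb ∩ W) = (Na ∩ W) ∩ Nb := by
      ext x; simp only [Finset.mem_inter]; tauto
    rw [hCeq] at h8b
    rw [hCeq2] at hIE
    -- (4) degree lower bounds for a and b
    have hdega : 1 + (Na ∩ W).card + (if D.Adj a b then 1 else 0) ≤ D.degree a := by
      have hsub : insert v ((Na ∩ W) ∪ (if D.Adj a b then {b} else ∅)) ⊆ Na := by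
        intro x hx
        simp only [Finset.mem_insert, Finset.mem_union] at hx
        rcases hx with rfl | hx | hx
        · rw [hNa, mem_neighborFinset]; exact hva.symm
        · exact (Finset.mem_inter.1 hx).1
        · split at hx
          · rw [Finset.mem_singleton] at hx
            rw [hx, hNa, mem_neighborFinset]
            assumption
          · simp at hx
      have hcard := Finset.card_le_card hsub
      have hdisj : Disjoint (Na ∩ W) (if D.Adj a b then {b} else ∅) := by
        rw [Finset.disjoint_right]
        intro x hx
        split at hx
        · rw [Finset.mem_singleton] at hx
          subst hx
          intro hmem
          have := (Finset.mem_inter.1 hmem).2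
          rw [hmemW] at this
          exact this.2.2 rfl
        · simp at hx
      have hnotv : v ∉ (Na ∩ W) ∪ (if D.Adj a b then {b} else ∅) := by
        simp only [Finset.mem_union]
        rintro (hx | hx)
        · have := (Finset.mem_inter.1 hx).2
          rw [hmemW] at this
          exact this.1 rfl
        · split at hx
          · rw [Finset.mem_singleton] at hx; exact hvnb hx
          · simp at hx
      rw [Finset.card_insert_of_notMem hnotv, Finset.card_union_of_disjoint hdisj] at hcard
      have hitecard : (if D.Adj a b then ({b} : Finset (Fin n)) else ∅).card
          = (if D.Adj a b then 1 else 0) := by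
        split <;> simp
      rw [hitecard] at hcard
      rw [SimpleGraph.degree, ← hNa]
      omega
    have hdegb : 1 + (Nb ∩ W).card + (if D.Adj a b then 1 else 0) ≤ D.degree b := by
      have hsub : insert v ((Nb ∩ W) ∪ (if D.Adj a b then {a} else ∅)) ⊆ Nb := by
        intro x hx
        simp only [Finset.mem_insert, Finset.mem_union] at hx
        rcases hx with rfl | hx | hx
        · rw [hNb, mem_neighborFinset]; exact hvb.symm
        · exact (Finset.mem_inter.1 hx).1
        · split at hx
          · rw [Finset.mem_singleton] at hx
            rw [hx, hNb, mem_neighborFinset]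
            exact (by assumption : D.Adj a b).symm
          · simp at hx
      have hcard := Finset.card_le_card hsub
      have hdisj : Disjoint (Nb ∩ W) (if D.Adj a b then {a} else ∅) := by
        rw [Finset.disjoint_right]
        intro x hx
        split at hx
        · rw [Finset.mem_singleton] at hx
          subst hx
          intro hmem
          have := (Finset.mem_inter.1 hmem).2
          rw [hmemW] at this
          exact this.2.1 rfl
        · simp at hx
      have hnotv : v ∉ (Nb ∩ W) ∪ (if D.Adj a b then {a} else ∅) := by
        simp only [Finset.mem_union]
        rintro (hx | hx)
        · have := (Finset.mem_inter.1 hx).2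
          rw [hmemW] at this
          exact this.1 rfl
        · split at hx
          · rw [Finset.mem_singleton] at hx; exact hvna hx
          · simp at hx
      rw [Finset.card_insert_of_notMem hnotv, Finset.card_union_of_disjoint hdisj] at hcard
      have hitecard : (if D.Adj a b then ({a} : Finset (Fin n)) else ∅).card
          = (if D.Adj a b then 1 else 0) := by
        split <;> simp
      rw [hitecard] at hcard
      rw [SimpleGraph.degree, ← hNb]
      omega
    -- (5) sum over W
    have hdeg0 : ∀ x, x ∉ W → H.degree x = 0 := by
      intro x hx
      rw [SimpleGraph.degree, Finset.card_eq_zero]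
      ext y
      simp only [mem_neighborFinset, Finset.notMem_empty, iff_false]
      intro hadj
      exact hx hadj.2.1
    have hWdeg : ∀ x ∈ W,
        (if x ∈ Na then 1 else 0) + (if x ∈ Nb then 1 else 0) + H.degree x
          ≤ D.degree x := by
      intro x hx
      have hsub : ((if x ∈ Na then {a} else ∅) ∪ (if x ∈ Nb then {b} else ∅))
          ∪ H.neighborFinset x ⊆ D.neighborFinset x := by
        intro y hy
        simp only [Finset.mem_union] at hy
        rw [mem_neighborFinset]
        rcases hy with (hy | hy) | hy
        · split at hy
          · rw [Finset.mem_singleton] at hy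
            rw [hy]
            have hax : D.Adj a x := by
              rw [← mem_neighborFinset, ← hNa]; assumption
            exact hax.symm
          · simp at hy
        · split at hy
          · rw [Finset.mem_singleton] at hy
            rw [hy]
            have hbx : D.Adj b x := by
              rw [← mem_neighborFinset, ← hNb]; assumption
            exact hbx.symm
          · simp at hy
        · exact ((mem_neighborFinset _ _ _).1 hy).1
      have hanW : a ∉ H.neighborFinset x := by
        rw [mem_neighborFinset]
        intro hadj
        exact ((hmemW a).1 hadj.2.2).2.1 rfl
      have hbnW : b ∉ H.neighborFinset x := by
        rw [mem_neighborFinset]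
        intro hadj
        exact ((hmemW b).1 hadj.2.2).2.2 rfl
      have hd1 : Disjoint (if x ∈ Na then ({a} : Finset (Fin n)) else ∅)
          (if x ∈ Nb then ({b} : Finset (Fin n)) else ∅) := by
        split <;> split <;> simp [hab, hab.symm]
      have hd2 : Disjoint ((if x ∈ Na then ({a} : Finset (Fin n)) else ∅)
          ∪ (if x ∈ Nb then ({b} : Finset (Fin n)) else ∅)) (H.neighborFinset x) := by
        rw [Finset.disjoint_left]
        intro y hy
        rcases Finset.mem_union.1 hy with hy | hy
        · split at hy
          · rw [Finset.mem_singleton] at hy; rw [hy]; exact hanW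
          · simp at hy
        · split at hy
          · rw [Finset.mem_singleton] at hy; rw [hy]; exact hbnW
          · simp at hy
      have hcard := Finset.card_le_card hsub
      rw [Finset.card_union_of_disjoint hd2, Finset.card_union_of_disjoint hd1] at hcard
      have e1 : (if x ∈ Na then ({a} : Finset (Fin n)) else ∅).card
          = (if x ∈ Na then 1 else 0) := by split <;> simp
      have e2 : (if x ∈ Nb then ({b} : Finset (Fin n)) else ∅).card
          = (if x ∈ Nb then 1 else 0) := by split <;> simp
      rw [e1, e2] at hcard
      exact hcard
    have hsumW : (Na ∩ W).card + (Nb ∩ W).card + (∑ x ∈ W, H.degree x)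
        ≤ ∑ x ∈ W, D.degree x := by
      have hle := Finset.sum_le_sum hWdeg
      rw [Finset.sum_add_distrib, Finset.sum_add_distrib] at hle
      have ea : (∑ x ∈ W, if x ∈ Na then 1 else 0) = (Na ∩ W).card := by
        simp only [Finset.sum_boole, Nat.cast_id]
        rw [Finset.filter_mem_eq_inter, Finset.inter_comm]
      have eb : (∑ x ∈ W, if x ∈ Nb then 1 else 0) = (Nb ∩ W).card := by
        simp only [Finset.sum_boole, Nat.cast_id]
        rw [Finset.filter_mem_eq_inter, Finset.inter_comm]
      rw [ea, eb] at hle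
      exact hle
    -- sum of H degrees over W equals twice H's edges
    have hHsum : (∑ x ∈ W, H.degree x) = 2 * H.edgeFinset.card := by
      have h1 := H.sum_degrees_eq_twice_card_edges
      have h2 : (∑ x ∈ W, H.degree x) + (∑ x ∈ ({v,a,b} : Finset (Fin n)), H.degree x)
          = ∑ x, H.degree x := Finset.sum_sdiff (Finset.subset_univ _)
      have h3 : (∑ x ∈ ({v,a,b} : Finset (Fin n)), H.degree x) = 0 := by
        apply Finset.sum_eq_zero
        intro x hx
        apply hdeg0
        rw [hmemW]
        simp only [Finset.mem_insert, Finset.mem_singleton] at hx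
        intro h
        rcases hx with rfl | rfl | rfl
        · exact h.1 rfl
        · exact h.2.1 rfl
        · exact h.2.2 rfl
      omega
    -- partition of the total degree sum
    have hsplit : (∑ x ∈ W, D.degree x) + (∑ x ∈ ({v,a,b} : Finset (Fin n)), D.degree x)
        = ∑ x, D.degree x := Finset.sum_sdiff (Finset.subset_univ _)
    have hvabsum : (∑ x ∈ ({v,a,b} : Finset (Fin n)), D.degree x)
        = D.degree v + (D.degree a + D.degree b) := by
      rw [Finset.sum_insert (by simp [hvna, hvnb]), Finset.sum_pair hab]
    -- the key lemma
    have hkey : ((Na ∩ W) \ Nb).card + ((Nb ∩ W) \ Na).card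
        ≤ H.edgeFinset.card + 1 + (if D.Adj a b then 1 else 0) :=
      key7 hn D hΔ hP v a b hNv hab
    omega
  · -- minimum degree ≥ 3
    push_neg at hc2
    have hmin3 : ∀ v, 3 ≤ D.degree v := fun v => hc2 v
    by_cases hc3 : ∃ v, D.degree v ≤ 3
    · obtain ⟨v, hv⟩ := hc3
      have hv3 : D.degree v = 3 := le_antisymm hv (hmin3 v)
      set N := D.neighborFinset v with hN
      set W : Finset (Fin n) := (univ : Finset (Fin n)) \ insert v N with hW
      have hvN : v ∉ N := by
        rw [hN, mem_neighborFinset]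
        exact D.irrefl
      have hWcard : W.card = n - 4 := by
        rw [hW, Finset.card_sdiff_of_subset (Finset.subset_univ _),
          Finset.card_insert_of_notMem hvN]
        rw [hN]
        have : D.degree v = N.card := rfl
        rw [SimpleGraph.degree] at hv3
        simp [hv3]
      -- double counting : sum over N of degrees
      have hdc : (∑ u ∈ N, D.degree u)
          = ∑ x : Fin n, (N.filter (fun u => D.Adj u x)).card := by
        have : ∀ u ∈ N, D.degree u = ∑ x : Fin n, if D.Adj u x then 1 else 0 := by
          intro u _
          rw [SimpleGraph.degree, neighborFinset_eq_filter, Finset.card_filter]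
        rw [Finset.sum_congr rfl this, Finset.sum_comm]
        apply Finset.sum_congr rfl
        intro x _
        rw [Finset.card_filter]
      have hterm_v : (N.filter (fun u => D.Adj u v)).card = 3 := by
        have : N.filter (fun u => D.Adj u v) = N := by
          apply Finset.filter_true_of_mem
          intro u hu
          rw [hN, mem_neighborFinset] at hu
          exact hu.symm
        rw [this, hN]
        exact hv3
      have hterm_W : ∀ x ∈ W, 1 ≤ (N.filter (fun u => D.Adj u x)).card := by
        intro x hx
        rw [hW, Finset.mem_sdiff] at hx
        simp only [Finset.mem_insert] at hx
        push_neg at hx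
        have hxv : x ≠ v := hx.2.1
        have hxN : x ∉ N := hx.2.2
        have hnadj : ¬D.Adj x v := by
          intro h
          exact hxN (by rw [hN, mem_neighborFinset]; exact h.symm)
        obtain ⟨z, hz1, hz2⟩ := hP x v hxv hnadj
        have hzN : z ∈ N := by rw [hN, mem_neighborFinset]; exact hz2.symm
        exact Finset.card_pos.2 ⟨z, Finset.mem_filter.2 ⟨hzN, hz1⟩⟩
      have hNsum : n - 1 ≤ ∑ u ∈ N, D.degree u := by
        rw [hdc]
        have hsub : insert v W ⊆ (univ : Finset (Fin n)) := Finset.subset_univ _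
        have hvW : v ∉ W := by
          rw [hW, Finset.mem_sdiff]
          simp
        have hsplit : ∑ x ∈ insert v W, (N.filter (fun u => D.Adj u x)).card
            ≤ ∑ x : Fin n, (N.filter (fun u => D.Adj u x)).card :=
          Finset.sum_le_sum_of_subset hsub
        rw [Finset.sum_insert hvW] at hsplit
        have h1 : (n - 4) * 1 ≤ ∑ x ∈ W, (N.filter (fun u => D.Adj u x)).card := by
          rw [← hWcard]
          exact Finset.card_nsmul_le_sum W _ 1 hterm_W
        omega
      -- assemble
      have hsplit2 : (∑ x ∈ W, D.degree x)
          + (∑ x ∈ insert v N, D.degree x) = ∑ x, D.degree x :=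
        Finset.sum_sdiff (Finset.subset_univ _)
      have hvN2 : (∑ x ∈ insert v N, D.degree x) = D.degree v + ∑ x ∈ N, D.degree x :=
        Finset.sum_insert hvN
      have hWsum : (n - 4) * 3 ≤ ∑ x ∈ W, D.degree x := by
        rw [← hWcard]
        exact Finset.card_nsmul_le_sum W _ 3 (fun x _ => hmin3 x)
      omega
    · -- minimum degree ≥ 4
      push_neg at hc3
      have h4 : ∀ v, 4 ≤ D.degree v := fun v => hc3 v
      have : n * 4 ≤ ∑ x : Fin n, D.degree x := by
        have := Finset.card_nsmul_le_sum (univ : Finset (Fin n)) (fun x => D.degree x) 4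
          (fun x _ => h4 x)
        simpa [hcardu] using this
      omega
end Aux

/-- For `n ≥ 5`, the `1`-total bondage number of the complete graph `K_n` is
`2n − 5`. -/
theorem kTotalBondage_completeGraph_one (n : ℕ) (hn : 5 ≤ n) :
    kTotalBondage (⊤ : SimpleGraph (Fin n)) 1 = 2 * n - 5 := by
  classical
  have hmem : (2*n-5) ∈ {m : ℕ | ∃ F : Set (Sym2 (Fin n)),
      F ⊆ (⊤ : SimpleGraph (Fin n)).edgeSet ∧ F.ncard = m ∧
      NoIsolatedVerts ((⊤ : SimpleGraph (Fin n)).deleteEdges F) ∧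
      totalDominationNumber (⊤ : SimpleGraph (Fin n)) + 1 ≤
        totalDominationNumber ((⊤ : SimpleGraph (Fin n)).deleteEdges F)} := by
    refine ⟨(GF n).edgeSet, SimpleGraph.edgeSet_mono le_top, ?_, H0_noiso hn, ?_⟩
    · rw [← SimpleGraph.coe_edgeFinset, Set.ncard_coe_finset, GF_card hn]
    · rw [tdn_top hn]
      apply le_csInf
      · refine ⟨(Set.univ : Set (Fin n)).ncard, Set.univ, rfl, ?_⟩
        intro v
        obtain ⟨u, hu⟩ := H0_noiso hn v
        exact ⟨u, Set.mem_univ u, hu⟩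
      · rintro m ⟨S, rfl, hS⟩
        exact H0_tds hn S hS
  apply le_antisymm
  · exact Nat.sInf_le hmem
  · apply le_csInf ⟨_, hmem⟩
    rintro m ⟨F, hFsub, rfl, hiso, hdom⟩
    set D := SimpleGraph.fromEdgeSet F with hD
    letI : DecidableRel D.Adj := Classical.decRel _
    have hDedge : D.edgeSet = F := by
      rw [hD, SimpleGraph.edgeSet_fromEdgeSet]
      ext e
      simp only [Set.mem_diff, Set.mem_setOf_eq]
      refine ⟨fun h => h.1, fun h => ⟨h, ?_⟩⟩
      have h2 := hFsub h
      rw [SimpleGraph.edgeSet_top] at h2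
      exact h2
    have hDadj : ∀ x y : Fin n, D.Adj x y ↔ s(x,y) ∈ F ∧ x ≠ y := by
      intro x y; rw [hD, SimpleGraph.fromEdgeSet_adj]
    have hΔ : ∀ v, D.degree v ≤ n - 2 := by
      intro v
      obtain ⟨u, hu⟩ := hiso v
      rw [SimpleGraph.deleteEdges_adj, SimpleGraph.top_adj] at hu
      have hvu : v ≠ u := hu.1
      have hsub : D.neighborFinset v ⊆ (Finset.univ.erase v).erase u := by
        intro w hw
        rw [SimpleGraph.mem_neighborFinset, hDadj] at hw
        rw [Finset.mem_erase, Finset.mem_erase]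
        exact ⟨fun h => hu.2 (by rw [← h]; exact hw.1), fun h => hw.2 h.symm,
          Finset.mem_univ w⟩
      have hle := Finset.card_le_card hsub
      have hmemu : u ∈ Finset.univ.erase v :=
        Finset.mem_erase.2 ⟨fun h => hvu h.symm, Finset.mem_univ u⟩
      rw [Finset.card_erase_of_mem hmemu, Finset.card_erase_of_mem (Finset.mem_univ v)] at hle
      have hcu : (Finset.univ : Finset (Fin n)).card = n := by simp
      have hdeg : D.degree v = (D.neighborFinset v).card := rfl
      omega
    have h3 : 3 ≤ totalDominationNumber ((⊤ : SimpleGraph (Fin n)).deleteEdges F) := by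
      rw [tdn_top hn] at hdom
      omega
    have hP : ∀ x y : Fin n, x ≠ y → ¬D.Adj x y → ∃ z, D.Adj z x ∧ D.Adj z y := by
      intro x y hxy hnadj
      have hsF : s(x,y) ∉ F := fun h => hnadj ((hDadj x y).2 ⟨h, hxy⟩)
      have hHadj : ((⊤ : SimpleGraph (Fin n)).deleteEdges F).Adj x y := by
        rw [SimpleGraph.deleteEdges_adj, SimpleGraph.top_adj]; exact ⟨hxy, hsF⟩
      have hnd : ¬ IsTotalDominatingSet ((⊤ : SimpleGraph (Fin n)).deleteEdges F)
          ({x, y} : Set (Fin n)) := by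
        intro hdomset
        have hle : totalDominationNumber ((⊤ : SimpleGraph (Fin n)).deleteEdges F)
            ≤ ({x,y} : Set (Fin n)).ncard := Nat.sInf_le ⟨{x,y}, rfl, hdomset⟩
        have hpc : ({x,y} : Set (Fin n)).ncard ≤ 2 := by
          have := Set.ncard_insert_le x ({y} : Set (Fin n))
          simpa using this
        omega
      rw [IsTotalDominatingSet] at hnd
      push_neg at hnd
      obtain ⟨w, hw⟩ := hnd
      have hwx := hw x (Or.inl rfl)
      have hwy := hw y (Or.inr rfl)
      have hwnx : w ≠ x := fun h => hwy (by rw [h]; exact hHadj)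
      have hwny : w ≠ y := fun h => hwx (by rw [h]; exact hHadj.symm)
      rw [SimpleGraph.deleteEdges_adj, SimpleGraph.top_adj] at hwx hwy
      push_neg at hwx hwy
      have hsx : s(w,x) ∈ F := hwx hwnx
      have hsy : s(w,y) ∈ F := hwy hwny
      exact ⟨w, (hDadj w x).2 ⟨hsx, hwnx⟩, (hDadj w y).2 ⟨hsy, hwny⟩⟩
    have hfin := er_bound hn D hΔ hP
    have hcard : D.edgeSet.ncard = F.ncard := congrArg Set.ncard hDedge
    omega
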